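/- Let k : [0,1]×[0,1] → ℝ be a continuous kernel having rank at least d (in the sense of a rank-d Mercer decomposition with a continuous nonnegative-definite remainder). Then there exists a natural number L_* such that for every L ≥ L_* and every regular grid t_1,…,t_L ∈ [0,1], the L×L real matrix K_{X,L} with entries k(t_i,t_j) satisfies rank(K_{X,L}) ≥ d. -/

import Mathlib

open MeasureTheory Matrix

section Aux

open Matrix

lemma riemann_aux (f : ℝ → ℝ) (hf : ContinuousOn f (Set.Icc 0 1)) {ε : ℝ} (hε : 0 < ε) :
    ∃ L0 : ℕ, 0 < L0 ∧ ∀ L : ℕ, L0 ≤ L → ∀ t : Fin L → ℝ,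
      (∀ j : Fin L, (j : ℝ) / L ≤ t j ∧ t j < ((j : ℝ) + 1) / L) →
      |(∑ j, f (t j)) - L * ∫ x in (0:ℝ)..1, f x| ≤ L * ε := by
  have huc := isCompact_Icc.uniformContinuousOn_of_continuous hf
  rw [Metric.uniformContinuousOn_iff] at huc
  obtain ⟨δ, hδ, hδ'⟩ := huc ε hε
  obtain ⟨n, hn⟩ := exists_nat_one_div_lt hδ
  refine ⟨n + 1, Nat.succ_pos n, ?_⟩
  intro L hL t ht
  have hLpos : 0 < L := lt_of_lt_of_le (Nat.succ_pos n) hL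
  have hLR : (0:ℝ) < L := by exact_mod_cast hLpos
  set a : ℕ → ℝ := fun j => j / L with ha
  have hmem : ∀ j : Fin L, t j ∈ Set.Icc (0:ℝ) 1 := by
    intro j
    obtain ⟨h1, h2⟩ := ht j
    constructor
    · exact le_trans (by positivity) h1
    · refine le_of_lt (lt_of_lt_of_le h2 ?_)
      rw [div_le_one hLR]
      have : (j : ℕ) + 1 ≤ L := j.isLt
      exact_mod_cast this
  have hsub : ∀ j : ℕ, j < L → Set.Icc (a j) (a (j+1)) ⊆ Set.Icc (0:ℝ) 1 := by
    intro j hj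
    apply Set.Icc_subset_Icc
    · positivity
    · rw [ha]; simp only; rw [div_le_one hLR]; exact_mod_cast hj
  have hle : ∀ j : ℕ, a j ≤ a (j+1) := by
    intro j; rw [ha]; simp only
    gcongr
    push_cast; linarith
  have hlen : ∀ j : ℕ, a (j+1) - a j = 1 / L := by
    intro j; rw [ha]; simp only; push_cast; field_simp; ring
  have hint : ∀ j : ℕ, j < L → IntervalIntegrable f volume (a j) (a (j+1)) := by
    intro j hj
    apply ContinuousOn.intervalIntegrable
    apply hf.mono
    rw [Set.uIcc_of_le (hle j)]
    exact hsub j hj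
  -- split the integral
  have hsplit : ∫ x in (0:ℝ)..1, f x = ∑ j ∈ Finset.range L, ∫ x in a j..a (j+1), f x := by
    rw [intervalIntegral.sum_integral_adjacent_intervals (fun k hk => hint k hk)]
    norm_num [ha, div_self hLR.ne']
  -- per-term estimate
  have hterm : ∀ j : Fin L, |f (t j) - L * ∫ x in a j..a (j+1), f x| ≤ ε := by
    intro j
    have hconst : IntervalIntegrable (fun _ : ℝ => f (t j)) volume (a j) (a (j+1)) :=
      intervalIntegrable_const
    have heq : f (t j) - L * ∫ x in a j..a (j+1), f x
        = L * ∫ x in a j..a (j+1), (f (t j) - f x) := by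
      rw [intervalIntegral.integral_sub hconst (hint j j.isLt),
        intervalIntegral.integral_const, hlen j]
      rw [smul_eq_mul, mul_sub, ← mul_assoc, mul_one_div_cancel hLR.ne', one_mul]
    rw [heq]
    have hbound : ‖∫ x in a j..a (j+1), (f (t j) - f x)‖ ≤ ε * |a (j+1) - a j| := by
      apply intervalIntegral.norm_integral_le_of_norm_le_const
      intro x hx
      rw [Set.uIoc_of_le (hle j)] at hx
      have hxI : x ∈ Set.Icc (0:ℝ) 1 := hsub j j.isLt ⟨hx.1.le, hx.2⟩
      have htj : t j ∈ Set.Icc (a (j:ℕ)) (a ((j:ℕ)+1)) := by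
        constructor
        · exact (ht j).1
        · refine le_of_lt ?_
          have := (ht j).2; rw [ha]; push_cast; simpa using this
      have hdist : dist (t j) x < δ := by
        rw [Real.dist_eq]
        have h1 : |t j - x| ≤ a ((j:ℕ)+1) - a (j:ℕ) := by
          rw [abs_sub_le_iff]
          constructor
          · linarith [htj.2, hx.1.le]
          · linarith [htj.1, hx.2]
        have h2 : a ((j:ℕ)+1) - a (j:ℕ) ≤ 1 / ((n:ℝ) + 1) := by
          rw [hlen]
          apply one_div_le_one_div_of_le (by positivity)
          exact_mod_cast hL
        linarith
      have := hδ' (t j) (hmem j) x hxI hdist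
      rw [Real.dist_eq] at this
      exact this.le
    calc |L * ∫ x in a j..a (j+1), (f (t j) - f x)|
        = L * |∫ x in a j..a (j+1), (f (t j) - f x)| := by
          rw [abs_mul, abs_of_pos hLR]
      _ ≤ L * (ε * |a ((j:ℕ)+1) - a (j:ℕ)|) := by
          exact mul_le_mul_of_nonneg_left hbound hLR.le
      _ = ε := by rw [hlen, abs_of_pos (by positivity)]; field_simp
  -- assemble
  have hsum : (∑ j, f (t j)) - L * ∫ x in (0:ℝ)..1, f x
      = ∑ j : Fin L, (f (t j) - L * ∫ x in a j..a ((j:ℕ)+1), f x) := by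
    rw [Finset.sum_sub_distrib, hsplit, Finset.mul_sum]
    congr 1
    rw [Finset.sum_range fun j => L * ∫ x in a j..a (j+1), f x]
  rw [hsum]
  calc |∑ j : Fin L, (f (t j) - L * ∫ x in a j..a ((j:ℕ)+1), f x)|
      ≤ ∑ j : Fin L, |f (t j) - L * ∫ x in a j..a ((j:ℕ)+1), f x| :=
        Finset.abs_sum_le_sum_abs _ _
    _ ≤ ∑ _j : Fin L, ε := Finset.sum_le_sum fun j _ => hterm j
    _ = L * ε := by simp [mul_comm]

lemma grid_mem {L : ℕ} (hL : 0 < L) (t : Fin L → ℝ)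
    (ht : ∀ j : Fin L, (j : ℝ) / L ≤ t j ∧ t j < ((j : ℝ) + 1) / L) :
    ∀ j : Fin L, t j ∈ Set.Icc (0:ℝ) 1 := by
  have hLR : (0:ℝ) < L := by exact_mod_cast hL
  intro j
  obtain ⟨h1, h2⟩ := ht j
  constructor
  · exact le_trans (by positivity) h1
  · refine le_of_lt (lt_of_lt_of_le h2 ?_)
    rw [div_le_one hLR]
    have : (j : ℕ) + 1 ≤ L := j.isLt
    exact_mod_cast this

end Aux

set_option maxHeartbeats 1000000 in
/-- For a continuous kernel on `[0,1]²` of rank at least `d`, there is a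
critical grid size `L⋆` such that for every `L ≥ L⋆` and every regular grid
`t₁,…,t_L` (i.e. `(j-1)/L ≤ t_j < j/L`), the `L × L` matrix `(k(tᵢ,tⱼ))` has rank at
least `d`. -/
theorem exists_critical_grid_size_rank_ge
    (d : ℕ) (k B : ℝ → ℝ → ℝ) (lam : Fin d → ℝ) (φ : Fin d → ℝ → ℝ)
    (hk : ContinuousOn (fun p : ℝ × ℝ => k p.1 p.2) (Set.Icc 0 1 ×ˢ Set.Icc 0 1))
    (hlam : ∀ m, 0 < lam m)
    (hφ : ∀ m, ContinuousOn (φ m) (Set.Icc 0 1))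
    (hortho : ∀ i j, (∫ x in (0:ℝ)..1, φ i x * φ j x) = if i = j then 1 else 0)
    (hB : ContinuousOn (fun p : ℝ × ℝ => B p.1 p.2) (Set.Icc 0 1 ×ˢ Set.Icc 0 1))
    (hBpsd : ∀ (n : ℕ) (s : Fin n → ℝ), (∀ i, s i ∈ Set.Icc (0:ℝ) 1) →
      (Matrix.of fun i j => B (s i) (s j)).PosSemidef)
    (hdecomp : ∀ s ∈ Set.Icc (0:ℝ) 1, ∀ t ∈ Set.Icc (0:ℝ) 1,
      k s t = (∑ m, lam m * φ m s * φ m t) + B s t) :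
    ∃ Lstar : ℕ, ∀ L : ℕ, Lstar ≤ L → ∀ t : Fin L → ℝ,
      (∀ j : Fin L, (j : ℝ) / L ≤ t j ∧ t j < ((j : ℝ) + 1) / L) →
      d ≤ (Matrix.of fun i j => k (t i) (t j)).rank := by
  classical
  rcases Nat.eq_zero_or_pos d with rfl | hd
  · exact ⟨1, fun L _ t _ => Nat.zero_le _⟩
  have hdR : (0:ℝ) < d := by exact_mod_cast hd
  set ε : ℝ := 1 / (2 * d) with hεdef
  have hεpos : 0 < ε := by positivity
  have hεd : ε * d = 1 / 2 := by rw [hεdef]; field_simp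
  choose L0 hL0pos hL0 using fun p : Fin d × Fin d =>
    riemann_aux (fun x => φ p.1 x * φ p.2 x) ((hφ p.1).mul (hφ p.2)) hεpos
  refine ⟨(Finset.univ.sup L0) + 1, ?_⟩
  intro L hL t ht
  have hLpos : 0 < L := lt_of_lt_of_le (Nat.succ_pos _) hL
  have hLR : (0:ℝ) < L := by exact_mod_cast hLpos
  have hmem := grid_mem hLpos t ht
  set Φm : Matrix (Fin L) (Fin d) ℝ := Matrix.of fun j m => φ m (t j) with hΦm
  set Km : Matrix (Fin L) (Fin L) ℝ := Matrix.of fun i j => k (t i) (t j) with hKm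
  set Bm : Matrix (Fin L) (Fin L) ℝ := Matrix.of fun i j => B (t i) (t j) with hBm
  set Am : Matrix (Fin L) (Fin L) ℝ := Φm * Matrix.diagonal lam * Φmᵀ with hAm
  have hBps : Bm.PosSemidef := hBpsd L t hmem
  -- K = A + B entrywise
  have hKsum : Km = Am + Bm := by
    ext i j
    have hA : Am i j = ∑ m, lam m * φ m (t i) * φ m (t j) := by
      rw [hAm, Matrix.mul_apply]
      refine Finset.sum_congr rfl fun m _ => ?_
      rw [Matrix.mul_diagonal]
      simp only [hΦm, Matrix.transpose_apply, Matrix.of_apply]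
      ring
    simp only [Matrix.add_apply, hKm, Matrix.of_apply, hA]
    rw [hdecomp (t i) (hmem i) (t j) (hmem j)]
    simp [hBm]
  -- the Gram matrix
  set G : Matrix (Fin d) (Fin d) ℝ := Φmᵀ * Φm with hG
  have hGent : ∀ i m : Fin d, |G i m - (if i = m then (L:ℝ) else 0)| ≤ L * ε := by
    intro i m
    have hsup : L0 (i, m) ≤ L := by
      refine le_trans (le_trans (Finset.le_sup (Finset.mem_univ (i, m))) (Nat.le_succ _)) hL
    have := hL0 (i, m) L hsup t ht
    have hent : G i m = ∑ j, φ i (t j) * φ m (t j) := by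
      rw [hG, Matrix.mul_apply]
      refine Finset.sum_congr rfl fun j _ => ?_
      simp [hΦm]
    rw [hortho i m] at this
    rw [hent]
    simpa [mul_ite] using this
  -- G is positive definite
  have hGpos : G.PosDef := by
    rw [Matrix.posDef_iff_dotProduct_mulVec]
    constructor
    · rw [Matrix.IsHermitian]
      ext i j
      simp only [Matrix.conjTranspose_apply, hG, Matrix.mul_apply, Matrix.transpose_apply,
        star_trivial]
      exact Finset.sum_congr rfl fun l _ => mul_comm _ _
    · intro x hx
      have hstar : star x = x := rfl
      rw [hstar]
      set S := ∑ i, x i ^ 2 with hS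
      have hSpos : 0 < S := by
        obtain ⟨i, hi⟩ := Function.ne_iff.mp hx
        exact Finset.sum_pos' (fun i _ => sq_nonneg _)
          ⟨i, Finset.mem_univ i, sq_pos_iff.mpr hi⟩
      have habs : (∑ i, |x i|) ^ 2 ≤ d * S := by
        have := sq_sum_le_card_mul_sum_sq (s := (Finset.univ : Finset (Fin d)))
          (f := fun i => |x i|)
        simpa [sq_abs, hS] using this
      have h1 : x ⬝ᵥ G *ᵥ x = ∑ i, ∑ m, x i * G i m * x m := by
        simp [dotProduct, Matrix.mulVec, Finset.mul_sum, mul_assoc]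
      have h2 : ∑ i, ∑ m, x i * (if i = m then (L:ℝ) else 0) * x m = L * S := by
        simp only [mul_ite, ite_mul, mul_zero, zero_mul]
        rw [hS, Finset.mul_sum]
        refine Finset.sum_congr rfl fun i _ => ?_
        rw [Finset.sum_ite_eq]
        simp only [Finset.mem_univ, if_true]
        ring
      have hquad : x ⬝ᵥ G *ᵥ x
          = L * S + ∑ i, ∑ m, x i * (G i m - if i = m then (L:ℝ) else 0) * x m := by
        rw [h1, ← h2, ← Finset.sum_add_distrib]
        refine Finset.sum_congr rfl fun i _ => ?_
        rw [← Finset.sum_add_distrib]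
        refine Finset.sum_congr rfl fun m _ => by ring
      have hEbound : |∑ i, ∑ m, x i * (G i m - if i = m then (L:ℝ) else 0) * x m|
          ≤ L * ε * (∑ i, |x i|) ^ 2 := by
        calc |∑ i, ∑ m, x i * (G i m - if i = m then (L:ℝ) else 0) * x m|
            ≤ ∑ i, |∑ m, x i * (G i m - if i = m then (L:ℝ) else 0) * x m| :=
              Finset.abs_sum_le_sum_abs _ _
          _ ≤ ∑ i, ∑ m, |x i * (G i m - if i = m then (L:ℝ) else 0) * x m| :=
              Finset.sum_le_sum fun i _ => Finset.abs_sum_le_sum_abs _ _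
          _ ≤ ∑ i, ∑ m, |x i| * (L * ε) * |x m| := by
              refine Finset.sum_le_sum fun i _ => Finset.sum_le_sum fun m _ => ?_
              rw [abs_mul, abs_mul]
              have h3 := hGent i m
              have h4 : |x i| * |G i m - if i = m then (L:ℝ) else 0| ≤ |x i| * (L * ε) :=
                mul_le_mul_of_nonneg_left h3 (abs_nonneg _)
              exact mul_le_mul_of_nonneg_right h4 (abs_nonneg _)
          _ = L * ε * (∑ i, |x i|) ^ 2 := by
              rw [sq, Finset.sum_mul_sum]
              rw [Finset.mul_sum]
              refine Finset.sum_congr rfl fun i _ => ?_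
              rw [Finset.mul_sum]
              refine Finset.sum_congr rfl fun m _ => by ring
      have hfinal : L * ε * (∑ i, |x i|) ^ 2 ≤ L / 2 * S := by
        calc L * ε * (∑ i, |x i|) ^ 2 ≤ L * ε * (d * S) := by
              refine mul_le_mul_of_nonneg_left habs (by positivity)
          _ = L / 2 * S := by
              rw [show (L:ℝ) * ε * (d * S) = L * (ε * d) * S by ring, hεd]; ring
      have := abs_le.mp hEbound
      rw [hquad]
      nlinarith [hSpos, hLR]
  -- the compressed matrix
  set H : Matrix (Fin d) (Fin d) ℝ := Φmᵀ * Km * Φm with hH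
  have hKsym : Kmᵀ = Km := by
    have hBsym : Bmᵀ = Bm := hBps.1
    have hAsym : Amᵀ = Am := by
      rw [hAm, Matrix.transpose_mul, Matrix.transpose_mul, Matrix.transpose_transpose,
        Matrix.diagonal_transpose, Matrix.mul_assoc]
    rw [hKsum, Matrix.transpose_add, hAsym, hBsym]
  have hHpos : H.PosDef := by
    rw [Matrix.posDef_iff_dotProduct_mulVec]
    constructor
    · show Hᴴ = H
      have : Hᴴ = Hᵀ := rfl
      rw [this, hH, Matrix.transpose_mul, Matrix.transpose_mul, Matrix.transpose_transpose,
        hKsym, Matrix.mul_assoc]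
    · intro x hx
      have hstar : star x = x := rfl
      rw [hstar]
      set w : Fin L → ℝ := Φm *ᵥ x with hw
      have hxHx : x ⬝ᵥ H *ᵥ x = w ⬝ᵥ Km *ᵥ w := by
        rw [hH, ← Matrix.mulVec_mulVec, ← Matrix.mulVec_mulVec,
          Matrix.dotProduct_mulVec, Matrix.vecMul_transpose]
      set u : Fin d → ℝ := G *ᵥ x with hu
      have huw : Φmᵀ *ᵥ w = u := by
        rw [hw, Matrix.mulVec_mulVec, hu, hG]
      have hAw : w ⬝ᵥ Am *ᵥ w = ∑ m, lam m * u m ^ 2 := by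
        rw [hAm, ← Matrix.mulVec_mulVec, ← Matrix.mulVec_mulVec, huw,
          Matrix.dotProduct_mulVec, ← Matrix.mulVec_transpose, huw]
        simp only [dotProduct, Matrix.mulVec_diagonal]
        exact Finset.sum_congr rfl fun m _ => by ring
      have hune : u ≠ 0 := by
        intro h0
        have hcontra := hGpos.dotProduct_mulVec_pos hx
        rw [hstar, ← hu, h0] at hcontra
        simp [dotProduct] at hcontra
      have hApos : 0 < ∑ m, lam m * u m ^ 2 := by
        obtain ⟨m, hm⟩ := Function.ne_iff.mp hune
        refine Finset.sum_pos' (fun m _ => mul_nonneg (hlam m).le (sq_nonneg _))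
          ⟨m, Finset.mem_univ m, mul_pos (hlam m) (sq_pos_iff.mpr hm)⟩
      have hBnn : 0 ≤ w ⬝ᵥ Bm *ᵥ w := by
        have := hBps.dotProduct_mulVec_nonneg w
        rwa [show star w = w from rfl] at this
      rw [hxHx, hKsum, Matrix.add_mulVec, dotProduct_add, hAw]
      linarith
  have hHrank : H.rank = d := by
    rw [Matrix.rank_of_isUnit H hHpos.isUnit, Fintype.card_fin]
  have hle : H.rank ≤ Km.rank :=
    le_trans (Matrix.rank_mul_le_left _ _) (Matrix.rank_mul_le_right _ _)
  calc d = H.rank := hHrank.symm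
    _ ≤ Km.rank := hle
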